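/- For |q| < 1 and any complex a, one has ∑_{n≥0} q^{binom(n,2)+n} (a;q)_n / (q;q)_n = (aq;q^2)_∞ / (q;q^2)_∞ (Lebesgue's identity). -/

import Mathlib

open Finset

noncomputable def qPoch (a q : ℂ) (n : ℕ) : ℂ := ∏ k ∈ Finset.range n, (1 - a * q ^ k)

noncomputable def qPochInf (a q : ℂ) : ℂ := ∏' k : ℕ, (1 - a * q ^ k)

lemma qPoch_zero (a q : ℂ) : qPoch a q 0 = 1 := by simp [qPoch]

lemma qPoch_succ (a q : ℂ) (n : ℕ) :
    qPoch a q (n + 1) = qPoch a q n * (1 - a * q ^ n) := Finset.prod_range_succ _ _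

lemma qPoch_succ' (a q : ℂ) (n : ℕ) :
    qPoch a q (n + 1) = (1 - a) * qPoch (a * q) q n := by
  rw [qPoch, Finset.prod_range_succ']
  simp only [pow_zero, mul_one, qPoch]
  rw [mul_comm]
  congr 1
  refine Finset.prod_congr rfl fun k _ => ?_
  ring

lemma one_sub_q_pow_ne (q : ℂ) (hq : ‖q‖ < 1) (k : ℕ) : 1 - q * q ^ k ≠ 0 := by
  have h : ‖q * q ^ k‖ < 1 := by
    rw [norm_mul, norm_pow]
    calc ‖q‖ * ‖q‖ ^ k ≤ ‖q‖ * 1 := by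
          exact mul_le_mul_of_nonneg_left (pow_le_one₀ (norm_nonneg q) hq.le) (norm_nonneg q)
      _ < 1 := by simpa using hq
  intro h0
  have : q * q ^ k = 1 := by linear_combination -h0
  rw [this] at h
  simp at h

lemma qPoch_q_ne_zero (q : ℂ) (hq : ‖q‖ < 1) (n : ℕ) : qPoch q q n ≠ 0 :=
  Finset.prod_ne_zero_iff.2 fun k _ => one_sub_q_pow_ne q hq k

lemma norm_prod_one_add_sub_one (w : ℕ → ℂ) (n : ℕ) :
    ‖(∏ k ∈ range n, (1 + w k)) - 1‖ ≤ (∏ k ∈ range n, (1 + ‖w k‖)) - 1 := by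
  induction n with
  | zero => simp
  | succ n ih =>
    have hQ : (1:ℝ) ≤ ∏ k ∈ range n, (1 + ‖w k‖) := by
      have := Finset.prod_le_prod (s := range n) (f := fun _ => (1:ℝ))
        (g := fun k => 1 + ‖w k‖) (fun i _ => zero_le_one)
        (fun i _ => by show (1:ℝ) ≤ 1 + ‖w i‖; linarith [norm_nonneg (w i)])
      simpa using this
    rw [Finset.prod_range_succ, Finset.prod_range_succ]
    have key : (∏ k ∈ range n, (1 + w k)) * (1 + w n) - 1
        = ((∏ k ∈ range n, (1 + w k)) - 1) * (1 + w n) + w n := by ring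
    rw [key]
    calc ‖((∏ k ∈ range n, (1 + w k)) - 1) * (1 + w n) + w n‖
        ≤ ‖((∏ k ∈ range n, (1 + w k)) - 1) * (1 + w n)‖ + ‖w n‖ := norm_add_le _ _
      _ = ‖(∏ k ∈ range n, (1 + w k)) - 1‖ * ‖1 + w n‖ + ‖w n‖ := by rw [norm_mul]
      _ ≤ ((∏ k ∈ range n, (1 + ‖w k‖)) - 1) * (1 + ‖w n‖) + ‖w n‖ := by
          have hb : ‖(1:ℂ) + w n‖ ≤ 1 + ‖w n‖ := (norm_add_le _ _).trans (by simp)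
          have h2 : (0:ℝ) ≤ ∏ k ∈ range n, (1 + ‖w k‖) - 1 := by linarith
          have := mul_le_mul ih hb (norm_nonneg _) h2
          linarith
      _ = (∏ k ∈ range n, (1 + ‖w k‖)) * (1 + ‖w n‖) - 1 := by ring

lemma prod_one_add_le_exp (x : ℕ → ℝ) (hx : ∀ k, 0 ≤ x k) (n : ℕ) :
    ∏ k ∈ range n, (1 + x k) ≤ Real.exp (∑ k ∈ range n, x k) := by
  rw [Real.exp_sum]
  refine Finset.prod_le_prod (fun k _ => by linarith [hx k]) fun k _ => ?_
  linarith [Real.add_one_le_exp (x k)]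

lemma geom_partial_le (q : ℂ) (hq : ‖q‖ < 1) (n : ℕ) :
    ∑ k ∈ range n, ‖q‖ ^ k ≤ (1 - ‖q‖)⁻¹ := by
  have hs : Summable (fun k : ℕ => ‖q‖ ^ k) := summable_geometric_of_lt_one (norm_nonneg q) hq
  calc ∑ k ∈ range n, ‖q‖ ^ k ≤ ∑' k : ℕ, ‖q‖ ^ k :=
        Summable.sum_le_tsum _ (fun k _ => pow_nonneg (norm_nonneg q) k) hs
    _ = (1 - ‖q‖)⁻¹ := tsum_geometric_of_lt_one (norm_nonneg q) hq

lemma norm_qPoch_sub_one_le (b q : ℂ) (hq : ‖q‖ < 1) (n : ℕ) :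
    ‖qPoch b q n - 1‖ ≤ Real.exp (‖b‖ * (1 - ‖q‖)⁻¹) - 1 := by
  have h1 : qPoch b q n = ∏ k ∈ range n, (1 + (-(b * q ^ k))) := by
    rw [qPoch]; refine Finset.prod_congr rfl fun k _ => by ring
  rw [h1]
  refine (norm_prod_one_add_sub_one _ n).trans ?_
  have h2 : ∀ k, ‖-(b * q ^ k)‖ = ‖b‖ * ‖q‖ ^ k := fun k => by
    rw [norm_neg, norm_mul, norm_pow]
  simp only [h2]
  have h3 : ∏ k ∈ range n, (1 + ‖b‖ * ‖q‖ ^ k) ≤ Real.exp (∑ k ∈ range n, ‖b‖ * ‖q‖ ^ k) :=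
    prod_one_add_le_exp _ (fun k => mul_nonneg (norm_nonneg b) (pow_nonneg (norm_nonneg q) k)) n
  have h4 : ∑ k ∈ range n, ‖b‖ * ‖q‖ ^ k ≤ ‖b‖ * (1 - ‖q‖)⁻¹ := by
    rw [← Finset.mul_sum]
    exact mul_le_mul_of_nonneg_left (geom_partial_le q hq n) (norm_nonneg b)
  have := Real.exp_le_exp.2 h4
  linarith

lemma norm_qPoch_le (b q : ℂ) (hq : ‖q‖ < 1) (n : ℕ) :
    ‖qPoch b q n‖ ≤ Real.exp (‖b‖ * (1 - ‖q‖)⁻¹) := by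
  have h := norm_qPoch_sub_one_le b q hq n
  have h2 : ‖qPoch b q n‖ ≤ ‖qPoch b q n - 1‖ + 1 := by
    calc ‖qPoch b q n‖ = ‖(qPoch b q n - 1) + 1‖ := by ring_nf
      _ ≤ ‖qPoch b q n - 1‖ + ‖(1:ℂ)‖ := norm_add_le _ _
      _ = ‖qPoch b q n - 1‖ + 1 := by simp
  linarith

lemma one_sub_sum_le_prod_one_sub (x : ℕ → ℝ) (hx0 : ∀ k, 0 ≤ x k) (hx1 : ∀ k, x k ≤ 1)
    (s : Finset ℕ) : 1 - ∑ k ∈ s, x k ≤ ∏ k ∈ s, (1 - x k) := by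
  induction s using Finset.cons_induction with
  | empty => simp
  | cons j s hj ih =>
    rw [Finset.prod_cons, Finset.sum_cons]
    have hP0 : (0:ℝ) ≤ ∏ k ∈ s, (1 - x k) :=
      Finset.prod_nonneg fun k _ => by linarith [hx1 k]
    have hP1 : ∏ k ∈ s, (1 - x k) ≤ 1 :=
      Finset.prod_le_one (fun k _ => by linarith [hx1 k]) (fun k _ => by linarith [hx0 k])
    nlinarith [hx0 j, hx1 j]

lemma qPoch_q_lower (q : ℂ) (hq : ‖q‖ < 1) :
    ∃ c : ℝ, 0 < c ∧ ∀ n, c ≤ ‖qPoch q q n‖ := by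
  have hq0 : (0:ℝ) ≤ ‖q‖ := norm_nonneg q
  have hqk : ∀ k : ℕ, ‖q‖ ^ (k+1) < 1 := fun k => pow_lt_one₀ hq0 hq (Nat.succ_ne_zero k)
  have hqk0 : ∀ k : ℕ, 0 ≤ ‖q‖ ^ (k+1) := fun k => pow_nonneg hq0 _
  obtain ⟨K, hK⟩ : ∃ K, ‖q‖ ^ (K+1) * (1 - ‖q‖)⁻¹ ≤ 1/2 := by
    have h0 : Filter.Tendsto (fun K : ℕ => ‖q‖ ^ (K+1) * (1 - ‖q‖)⁻¹) Filter.atTop (nhds 0) := by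
      have := (tendsto_pow_atTop_nhds_zero_of_lt_one hq0 hq).comp
        (Filter.tendsto_add_atTop_nat 1)
      simpa using this.mul_const ((1 - ‖q‖)⁻¹)
    exact ((h0.eventually_lt_const (by norm_num : (0:ℝ) < 1/2)).mono
      (fun K h => h.le)).exists
  have hrpos : ∀ n : ℕ, 0 < ∏ k ∈ range n, (1 - ‖q‖ ^ (k+1)) := fun n =>
    Finset.prod_pos fun k _ => by linarith [hqk k]
  have hrle : ∀ n : ℕ, (∏ k ∈ range n, (1 - ‖q‖ ^ (k+1))) ≤ ‖qPoch q q n‖ := by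
    intro n
    rw [qPoch, norm_prod]
    refine Finset.prod_le_prod (fun k _ => by linarith [hqk k]) fun k _ => ?_
    have h1 : ‖(1:ℂ)‖ - ‖q * q ^ k‖ ≤ ‖1 - q * q ^ k‖ := norm_sub_norm_le _ _
    have h2 : ‖q * q ^ k‖ = ‖q‖ ^ (k+1) := by
      rw [norm_mul, norm_pow, pow_succ, mul_comm]
    rw [h2] at h1; simpa using h1
  refine ⟨(∏ k ∈ range K, (1 - ‖q‖ ^ (k+1))) / 2, div_pos (hrpos K) two_pos,
    fun n => le_trans ?_ (hrle n)⟩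
  by_cases hn : n ≤ K
  · have hdecomp : (∏ k ∈ range K, (1 - ‖q‖ ^ (k+1)))
        = (∏ k ∈ range n, (1 - ‖q‖ ^ (k+1))) * ∏ k ∈ Finset.Ico n K, (1 - ‖q‖ ^ (k+1)) :=
      (Finset.prod_range_mul_prod_Ico _ hn).symm
    have h1 : ∏ k ∈ Finset.Ico n K, (1 - ‖q‖ ^ (k+1)) ≤ 1 :=
      Finset.prod_le_one (fun k _ => by linarith [hqk k]) (fun k _ => by linarith [hqk0 k])
    rw [hdecomp]
    nlinarith [hrpos n]
  · push_neg at hn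
    have hKn : K ≤ n := hn.le
    have hdecomp : (∏ k ∈ range n, (1 - ‖q‖ ^ (k+1)))
        = (∏ k ∈ range K, (1 - ‖q‖ ^ (k+1))) * ∏ k ∈ Finset.Ico K n, (1 - ‖q‖ ^ (k+1)) :=
      (Finset.prod_range_mul_prod_Ico _ hKn).symm
    have hsum : ∑ k ∈ Finset.Ico K n, ‖q‖ ^ (k+1) ≤ 1/2 := by
      have h1 : ∑ k ∈ Finset.Ico K n, ‖q‖ ^ (k+1)
          = ∑ j ∈ range (n - K), ‖q‖ ^ (K + j + 1) := by
        rw [Finset.sum_Ico_eq_sum_range]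
      have h2 : ∑ j ∈ range (n - K), ‖q‖ ^ (K + j + 1)
          = ‖q‖ ^ (K+1) * ∑ j ∈ range (n - K), ‖q‖ ^ j := by
        rw [Finset.mul_sum]
        exact Finset.sum_congr rfl fun j _ => by ring
      rw [h1, h2]
      calc ‖q‖ ^ (K+1) * ∑ j ∈ range (n - K), ‖q‖ ^ j
          ≤ ‖q‖ ^ (K+1) * (1 - ‖q‖)⁻¹ :=
            mul_le_mul_of_nonneg_left (geom_partial_le q hq _) (hqk0 K)
        _ ≤ 1/2 := hK
    have hp : 1 - ∑ k ∈ Finset.Ico K n, ‖q‖ ^ (k+1)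
        ≤ ∏ k ∈ Finset.Ico K n, (1 - ‖q‖ ^ (k+1)) :=
      one_sub_sum_le_prod_one_sub _ (fun k => hqk0 k) (fun k => (hqk k).le) _
    have h3 : (1:ℝ)/2 ≤ ∏ k ∈ Finset.Ico K n, (1 - ‖q‖ ^ (k+1)) := by linarith
    rw [hdecomp]
    nlinarith [hrpos K]

noncomputable def qT (q b : ℂ) (n : ℕ) : ℂ := q ^ (n.choose 2 + n) * qPoch b q n / qPoch q q n

lemma norm_qT_le (q b : ℂ) (hq : ‖q‖ < 1) {c : ℝ} (hc : 0 < c)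
    (hlb : ∀ n, c ≤ ‖qPoch q q n‖) (n : ℕ) :
    ‖qT q b n‖ ≤ (Real.exp (‖b‖ * (1 - ‖q‖)⁻¹) / c) * ‖q‖ ^ n := by
  have hq0 : (0:ℝ) ≤ ‖q‖ := norm_nonneg q
  have h1 : ‖qT q b n‖ = ‖q‖ ^ (n.choose 2 + n) * ‖qPoch b q n‖ / ‖qPoch q q n‖ := by
    rw [qT, norm_div, norm_mul, norm_pow]
  rw [h1]
  have h2 : ‖q‖ ^ (n.choose 2 + n) ≤ ‖q‖ ^ n :=
    pow_le_pow_of_le_one hq0 hq.le (Nat.le_add_left n _)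
  have h3 : ‖qPoch b q n‖ ≤ Real.exp (‖b‖ * (1 - ‖q‖)⁻¹) := norm_qPoch_le b q hq n
  calc ‖q‖ ^ (n.choose 2 + n) * ‖qPoch b q n‖ / ‖qPoch q q n‖
      ≤ ‖q‖ ^ n * Real.exp (‖b‖ * (1 - ‖q‖)⁻¹) / c :=
        div_le_div₀ (by positivity)
          (mul_le_mul h2 h3 (norm_nonneg _) (pow_nonneg hq0 n)) hc (hlb n)
      _ = (Real.exp (‖b‖ * (1 - ‖q‖)⁻¹) / c) * ‖q‖ ^ n := by ring

lemma summable_qT (q b : ℂ) (hq : ‖q‖ < 1) : Summable (qT q b) := by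
  obtain ⟨c, hc, hlb⟩ := qPoch_q_lower q hq
  refine Summable.of_norm_bounded
    (g := fun n => (Real.exp (‖b‖ * (1 - ‖q‖)⁻¹) / c) * ‖q‖ ^ n)
    ((summable_geometric_of_lt_one (norm_nonneg q) hq).mul_left _)
    (norm_qT_le q b hq hc hlb)

lemma qT_key (q a : ℂ) (hq : ‖q‖ < 1) (M : ℕ) :
    ∑ n ∈ range (M+1), qT q a n
      = (1 - a*q) * ∑ k ∈ range M, qT q (a*q^2) k
        + q ^ ((M+1).choose 2) * qPoch (a*q) q M / qPoch q q M := by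
  induction M with
  | zero => simp [qT, qPoch_zero]
  | succ M ih =>
    rw [Finset.sum_range_succ, ih, Finset.sum_range_succ, mul_add]
    have hD : qPoch q q M ≠ 0 := qPoch_q_ne_zero q hq M
    have hu : (1 : ℂ) - q * q ^ M ≠ 0 := one_sub_q_pow_ne q hq M
    have e1 : qPoch a q (M+1) = (1-a) * qPoch (a*q) q M := qPoch_succ' a q M
    have e2 : qPoch q q (M+1) = qPoch q q M * (1 - q*q^M) := qPoch_succ q q M
    have e3 : qPoch (a*q) q (M+1) = qPoch (a*q) q M * (1 - a*q*q^M) := by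
      rw [qPoch_succ]
    have e4 : (1-a*q) * qPoch (a*q^2) q M = qPoch (a*q) q M * (1 - a*q*q^M) := by
      rw [← e3, qPoch_succ']
      rw [show a*q*q = a*q^2 by ring]
    have e5 : ((M+1)+1).choose 2 = (M+1).choose 2 + (M+1) := by
      rw [Nat.choose_succ_succ ((M+1)) 1, Nat.choose_one_right, add_comm]
    have e6 : (M+1).choose 2 = M.choose 2 + M := by
      rw [Nat.choose_succ_succ M 1, Nat.choose_one_right, add_comm]
    simp only [qT, e1, e2, e3, e5, e6]
    rw [show (1-a*q) * (q ^ (M.choose 2 + M) * qPoch (a*q^2) q M / qPoch q q M)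
        = q ^ (M.choose 2 + M) * ((1-a*q) * qPoch (a*q^2) q M) / qPoch q q M by ring, e4]
    field_simp
    ring

open Filter Topology

lemma choose_two_ge (M : ℕ) : M ≤ (M+1).choose 2 := by
  rw [Nat.choose_succ_succ M 1, Nat.choose_one_right]
  exact Nat.le_add_right M _

lemma qF_funceq (q a : ℂ) (hq : ‖q‖ < 1) :
    ∑' n, qT q a n = (1 - a*q) * ∑' n, qT q (a*q^2) n := by
  obtain ⟨c, hc, hlb⟩ := qPoch_q_lower q hq
  have hq0 : (0:ℝ) ≤ ‖q‖ := norm_nonneg q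
  have hL : Tendsto (fun M => ∑ n ∈ range (M+1), qT q a n) atTop (𝓝 (∑' n, qT q a n)) :=
    ((summable_qT q a hq).hasSum.tendsto_sum_nat).comp (tendsto_add_atTop_nat 1)
  have hR1 : Tendsto (fun M => (1 - a*q) * ∑ k ∈ range M, qT q (a*q^2) k) atTop
      (𝓝 ((1 - a*q) * ∑' n, qT q (a*q^2) n)) :=
    ((summable_qT q (a*q^2) hq).hasSum.tendsto_sum_nat).const_mul _
  have hrem : Tendsto (fun M => q ^ ((M+1).choose 2) * qPoch (a*q) q M / qPoch q q M)
      atTop (𝓝 0) := by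
    rw [tendsto_zero_iff_norm_tendsto_zero]
    refine squeeze_zero (fun M => norm_nonneg _)
      (g := fun M => (Real.exp (‖a*q‖ * (1 - ‖q‖)⁻¹) / c) * ‖q‖ ^ M) ?_ ?_
    · intro M
      have h1 : ‖q ^ ((M+1).choose 2) * qPoch (a*q) q M / qPoch q q M‖
          = ‖q‖ ^ ((M+1).choose 2) * ‖qPoch (a*q) q M‖ / ‖qPoch q q M‖ := by
        rw [norm_div, norm_mul, norm_pow]
      rw [h1]
      calc ‖q‖ ^ ((M+1).choose 2) * ‖qPoch (a*q) q M‖ / ‖qPoch q q M‖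
          ≤ ‖q‖ ^ M * Real.exp (‖a*q‖ * (1 - ‖q‖)⁻¹) / c :=
            div_le_div₀ (by positivity)
              (mul_le_mul (pow_le_pow_of_le_one hq0 hq.le (choose_two_ge M))
                (norm_qPoch_le (a*q) q hq M) (norm_nonneg _) (pow_nonneg hq0 M))
              hc (hlb M)
        _ = (Real.exp (‖a*q‖ * (1 - ‖q‖)⁻¹) / c) * ‖q‖ ^ M := by ring
    · simpa using (tendsto_pow_atTop_nhds_zero_of_lt_one hq0 hq).const_mul
        (Real.exp (‖a*q‖ * (1 - ‖q‖)⁻¹) / c)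
  have hcomb : Tendsto (fun M => (1 - a*q) * ∑ k ∈ range M, qT q (a*q^2) k
      + q ^ ((M+1).choose 2) * qPoch (a*q) q M / qPoch q q M) atTop
      (𝓝 ((1 - a*q) * ∑' n, qT q (a*q^2) n)) := by
    simpa using hR1.add hrem
  have heq : (fun M => ∑ n ∈ range (M+1), qT q a n)
      = fun M => (1 - a*q) * ∑ k ∈ range M, qT q (a*q^2) k
        + q ^ ((M+1).choose 2) * qPoch (a*q) q M / qPoch q q M :=
    funext fun M => qT_key q a hq M
  rw [heq] at hL
  exact tendsto_nhds_unique hL hcomb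

lemma qF_iter (q a : ℂ) (hq : ‖q‖ < 1) (N : ℕ) :
    ∑' n, qT q a n = qPoch (a*q) (q^2) N * ∑' n, qT q (a*(q^2)^N) n := by
  induction N with
  | zero => simp [qPoch_zero]
  | succ N ih =>
    rw [ih, qPoch_succ, qF_funceq q (a*(q^2)^N) hq]
    rw [show a*(q^2)^N*q^2 = a*(q^2)^(N+1) by ring]
    rw [show (1:ℂ) - a*(q^2)^N*q = 1 - a*q*(q^2)^N by ring]
    ring

lemma multipliable_one_sub (b r : ℂ) (hr : ‖r‖ < 1) :
    Multipliable (fun k : ℕ => 1 - b * r ^ k) := by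
  by_cases hz : ∃ j, 1 - b * r ^ j = 0
  · obtain ⟨j, hj⟩ := hz
    refine ⟨0, ?_⟩
    unfold HasProd
    have hev : ∀ᶠ s in (atTop : Filter (Finset ℕ)),
        (∏ i ∈ s, (1 - b * r ^ i)) = 0 := by
      refine Filter.eventually_atTop.2 ⟨{j}, fun s hs => ?_⟩
      exact Finset.prod_eq_zero (hs (Finset.mem_singleton_self j)) hj
    exact Tendsto.congr' (hev.mono fun s h => h.symm) tendsto_const_nhds
  · push_neg at hz
    refine Complex.multipliable_of_summable_log ?_
    obtain ⟨K, hK⟩ : ∃ K, ‖b‖ * ‖r‖ ^ K ≤ 1/2 := by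
      have h0 : Tendsto (fun K : ℕ => ‖b‖ * ‖r‖ ^ K) atTop (𝓝 0) := by
        simpa using (tendsto_pow_atTop_nhds_zero_of_lt_one (norm_nonneg r) hr).const_mul ‖b‖
      exact ((h0.eventually_lt_const (by norm_num : (0:ℝ) < 1/2)).mono
        (fun K h => h.le)).exists
    rw [← summable_nat_add_iff K]
    have hsmall : ∀ k : ℕ, ‖b * r ^ (k + K)‖ ≤ (1/2) * ‖r‖ ^ k := by
      intro k
      rw [norm_mul, norm_pow, add_comm k K, pow_add]
      calc ‖b‖ * (‖r‖ ^ K * ‖r‖ ^ k) = (‖b‖ * ‖r‖ ^ K) * ‖r‖ ^ k := by ring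
        _ ≤ (1/2) * ‖r‖ ^ k :=
          mul_le_mul_of_nonneg_right hK (pow_nonneg (norm_nonneg r) k)
    refine Summable.of_norm_bounded (g := fun k => (3/2) * ((1/2) * ‖r‖ ^ k))
      (((summable_geometric_of_lt_one (norm_nonneg r) hr).mul_left _).mul_left _)
      (fun k => ?_)
    have h1 : ‖-(b * r ^ (k + K))‖ ≤ 1/2 := by
      rw [norm_neg]
      refine (hsmall k).trans ?_
      have : ‖r‖ ^ k ≤ 1 := pow_le_one₀ (norm_nonneg r) hr.le
      nlinarith
    show ‖Complex.log (1 - b * r ^ (k + K))‖ ≤ 3/2 * (1/2 * ‖r‖ ^ k)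
    have h2 : (1 : ℂ) - b * r ^ (k + K) = 1 + -(b * r ^ (k + K)) := by ring
    rw [h2]
    refine (Complex.norm_log_one_add_half_le_self h1).trans ?_
    rw [norm_neg]
    exact mul_le_mul_of_nonneg_left (hsmall k) (by norm_num)

lemma qF_prod (q a : ℂ) (hq : ‖q‖ < 1) :
    ∑' n, qT q a n = qPochInf (a*q) (q^2) * ∑' n, qT q 0 n := by
  have hq2 : ‖q^2‖ < 1 := by
    rw [norm_pow]
    calc ‖q‖^2 ≤ ‖q‖*1 := by nlinarith [norm_nonneg q]
      _ < 1 := by simpa using hq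
  have hm := multipliable_one_sub (a*q) (q^2) hq2
  have h1 : Tendsto (fun N => qPoch (a*q) (q^2) N) atTop (𝓝 (qPochInf (a*q) (q^2))) :=
    hm.hasProd.tendsto_prod_nat
  obtain ⟨c, hc, hlb⟩ := qPoch_q_lower q hq
  have h2 : Tendsto (fun N => ∑' n, qT q (a*(q^2)^N) n) atTop (𝓝 (∑' n, qT q 0 n)) := by
    refine tendsto_tsum_of_dominated_convergence
      (bound := fun n => (Real.exp (‖a‖ * (1 - ‖q‖)⁻¹) / c) * ‖q‖ ^ n)
      (((summable_geometric_of_lt_one (norm_nonneg q) hq).mul_left _)) (fun k => ?_) ?_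
    · have hb : Tendsto (fun N : ℕ => a*(q^2)^N) atTop (𝓝 0) := by
        simpa using (tendsto_pow_atTop_nhds_zero_of_norm_lt_one hq2).const_mul a
      have hcont : Continuous (fun b : ℂ => qT q b k) := by
        unfold qT qPoch
        exact ((continuous_const.mul (continuous_finset_prod _ fun i _ =>
          continuous_const.sub (continuous_id.mul continuous_const)))).div_const _
      have := (hcont.tendsto 0).comp hb
      exact this
    · refine Filter.Eventually.of_forall fun N k => ?_
      refine (norm_qT_le q (a*(q^2)^N) hq hc hlb k).trans ?_
      have hble : ‖a*(q^2)^N‖ ≤ ‖a‖ := by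
        rw [norm_mul, norm_pow]
        calc ‖a‖ * ‖q^2‖^N ≤ ‖a‖ * 1 :=
              mul_le_mul_of_nonneg_left (pow_le_one₀ (norm_nonneg _) hq2.le) (norm_nonneg a)
          _ = ‖a‖ := mul_one _
      have : Real.exp (‖a*(q^2)^N‖ * (1 - ‖q‖)⁻¹) ≤ Real.exp (‖a‖ * (1 - ‖q‖)⁻¹) := by
        apply Real.exp_le_exp.2
        apply mul_le_mul_of_nonneg_right hble
        exact inv_nonneg.2 (by linarith)
      have hpow : (0:ℝ) ≤ ‖q‖ ^ k := pow_nonneg (norm_nonneg q) k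
      apply mul_le_mul_of_nonneg_right _ hpow
      exact div_le_div₀ (by positivity) this hc le_rfl
  have h3 := h1.mul h2
  have heq : (fun N => qPoch (a*q) (q^2) N * ∑' n, qT q (a*(q^2)^N) n)
      = fun _ => ∑' n, qT q a n := funext fun N => (qF_iter q a hq N).symm
  rw [heq] at h3
  exact tendsto_nhds_unique tendsto_const_nhds h3

lemma qF_one (q : ℂ) : ∑' n, qT q 1 n = 1 := by
  rw [tsum_eq_single 0]
  · simp [qT, qPoch_zero]
  · intro n hn
    have h0 : qPoch 1 q n = 0 := by
      rw [qPoch]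
      refine Finset.prod_eq_zero (i := 0) ?_ (by simp)
      simpa using Nat.pos_of_ne_zero hn
    simp [qT, h0]

theorem stmt8 (q a : ℂ) (hq : ‖q‖ < 1) :
    ∑' n : ℕ, (q ^ (n.choose 2 + n) * qPoch a q n / qPoch q q n)
    = qPochInf (a * q) (q ^ 2) / qPochInf q (q ^ 2) := by
  have hq' : ‖q‖ < 1 := hq
  have hA : ∑' n, qT q a n = qPochInf (a*q) (q^2) * ∑' n, qT q 0 n := qF_prod q a hq'
  have h1 : ∑' n, qT q 1 n = qPochInf (1*q) (q^2) * ∑' n, qT q 0 n := qF_prod q 1 hq'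
  rw [one_mul, qF_one] at h1
  have hne : qPochInf q (q^2) ≠ 0 := left_ne_zero_of_mul_eq_one h1.symm
  have hF0 : ∑' n, qT q 0 n = (qPochInf q (q^2))⁻¹ :=
    eq_inv_of_mul_eq_one_left (by rw [mul_comm] at h1; exact h1.symm)
  show ∑' n, qT q a n = _
  rw [hA, hF0, div_eq_mul_inv]
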